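/- arXiv:1910.04348 — 2 statements merged into one kernel-verified Lean document; each statement's English description precedes it below -/
import Mathlib

section
/- For any q₁, q₂ ∈ ℝⁿ, one has (∇A(q₁) − ∇A(q₂)) · (q₁ − q₂) ≥ (1 + (|q₁| + |q₂|)²)^{-3/2} |q₁ − q₂|², where A(q) = √(1 + |q|²). In particular the left-hand side is nonnegative, and it equals zero if and only if q₁ = q₂. -/
open RealInnerProductSpace

set_option maxHeartbeats 1000000

set_option maxHeartbeats 1000000 in
private lemma key' (a b t s₁ s₂ S : ℝ) (ha : 0 ≤ a) (hb : 0 ≤ b) (ht : t ≤ a*b)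
    (h1 : s₁^2 = 1 + a^2) (h2 : s₂^2 = 1 + b^2)
    (hs₁ : 1 ≤ s₁) (hs₂ : 1 ≤ s₂) (hs₁S : s₁ ≤ S) (hs₂S : s₂ ≤ S) :
    s₁ * s₂ * (a^2+b^2-2*t) ≤ S^3 * (s₂*a^2 + s₁*b^2 - (s₁+s₂)*t) := by
  have hS1 : 1 ≤ S := le_trans hs₁ hs₁S
  have hs₁0 : (0:ℝ) ≤ s₁ := by linarith
  have hs₂0 : (0:ℝ) ≤ s₂ := by linarith
  have hS0 : (0:ℝ) ≤ S := by linarith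
  have e2 : s₁ * s₂ ≤ S^2 := by nlinarith
  have hS3 : S^2 ≤ S^3 := by nlinarith [sq_nonneg S]
  have hslope : 2 * (s₁ * s₂) ≤ S^3 * (s₁ + s₂) := by
    nlinarith [mul_nonneg (mul_nonneg (mul_nonneg hS0 hS0) hS0) (by linarith : (0:ℝ) ≤ s₁ + s₂ - 2)]
  have hab : s₁ * s₂ * (a^2+b^2-2*(a*b)) ≤ S^3 * (s₂*a^2 + s₁*b^2 - (s₁+s₂)*(a*b)) := by
    rcases eq_or_lt_of_le (by positivity : (0:ℝ) ≤ a + b) with h0 | h0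
    · have ha0 : a = 0 := by nlinarith
      have hb0 : b = 0 := by nlinarith
      subst ha0; subst hb0; nlinarith
    · have hid : (a*s₂ - b*s₁)*(a*s₂ + b*s₁) = (a-b)*(a+b) := by nlinarith [h1, h2]
      have hpos : 0 < a*s₂ + b*s₁ := by nlinarith
      have e1 : a*s₂ + b*s₁ ≤ (a+b)*S := by
        nlinarith [mul_nonneg ha (by linarith : (0:ℝ) ≤ S - s₂),
          mul_nonneg hb (by linarith : (0:ℝ) ≤ S - s₁)]
      have hkey : s₁ * s₂ * (a-b)^2 * (a*s₂ + b*s₁) ≤ (S^3 * ((a-b)*(a*s₂-b*s₁))) * (a*s₂+b*s₁) := by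
        calc s₁ * s₂ * (a-b)^2 * (a*s₂ + b*s₁) ≤ S^2 * (a-b)^2 * ((a+b)*S) := by
              have n1 : s₁ * s₂ * (a-b)^2 ≤ S^2 * (a-b)^2 :=
                mul_le_mul_of_nonneg_right e2 (sq_nonneg _)
              exact mul_le_mul n1 e1 (le_of_lt hpos) (by positivity)
          _ = (S^3 * ((a-b)*(a*s₂-b*s₁))) * (a*s₂+b*s₁) := by
              linear_combination (-(S^3) * (a-b)) * hid
      have := le_of_mul_le_mul_right hkey hpos
      linarith [this]
  nlinarith [mul_nonneg (by linarith : (0:ℝ) ≤ a*b - t)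
    (by linarith : (0:ℝ) ≤ S^3*(s₁+s₂) - 2*(s₁*s₂))]

/-- Quantitative monotonicity of `∇A(q) = q/√(1+|q|²)`:
`(∇A(q₁) − ∇A(q₂)) · (q₁ − q₂) ≥ (1 + (|q₁|+|q₂|)²)^{-3/2} |q₁ − q₂|²`; in particular the
left-hand side is nonnegative and vanishes iff `q₁ = q₂`. -/
theorem stmt_2 (n : ℕ) (hn : 1 ≤ n)
    (g : EuclideanSpace ℝ (Fin n) → EuclideanSpace ℝ (Fin n))
    (hg : ∀ q, g q = (Real.sqrt (1 + ‖q‖ ^ 2))⁻¹ • q)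
    (q₁ q₂ : EuclideanSpace ℝ (Fin n)) :
    (1 + (‖q₁‖ + ‖q₂‖) ^ 2) ^ (-(3 / 2 : ℝ)) * ‖q₁ - q₂‖ ^ 2 ≤ ⟪g q₁ - g q₂, q₁ - q₂⟫ ∧
    0 ≤ ⟪g q₁ - g q₂, q₁ - q₂⟫ ∧
    (⟪g q₁ - g q₂, q₁ - q₂⟫ = 0 ↔ q₁ = q₂) := by
  set a := ‖q₁‖ with ha_def
  set b := ‖q₂‖ with hb_def
  have ha : 0 ≤ a := norm_nonneg _
  have hb : 0 ≤ b := norm_nonneg _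
  set s₁ := Real.sqrt (1 + a ^ 2) with hs₁_def
  set s₂ := Real.sqrt (1 + b ^ 2) with hs₂_def
  set S := Real.sqrt (1 + (a + b) ^ 2) with hS_def
  have h1 : s₁ ^ 2 = 1 + a ^ 2 := Real.sq_sqrt (by positivity)
  have h2 : s₂ ^ 2 = 1 + b ^ 2 := Real.sq_sqrt (by positivity)
  have hSsq : S ^ 2 = 1 + (a + b) ^ 2 := Real.sq_sqrt (by positivity)
  have hs₁ : 1 ≤ s₁ := by
    rw [show (1:ℝ) = Real.sqrt 1 by simp [Real.sqrt_one]]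
    exact Real.sqrt_le_sqrt (by nlinarith)
  have hs₂ : 1 ≤ s₂ := by
    rw [show (1:ℝ) = Real.sqrt 1 by simp [Real.sqrt_one]]
    exact Real.sqrt_le_sqrt (by nlinarith)
  have hs₁S : s₁ ≤ S := Real.sqrt_le_sqrt (by nlinarith)
  have hs₂S : s₂ ≤ S := Real.sqrt_le_sqrt (by nlinarith)
  have hS0 : 0 < S := lt_of_lt_of_le one_pos (le_trans hs₁ hs₁S)
  set t := ⟪q₁, q₂⟫ with ht_def
  have ht : t ≤ a * b := real_inner_le_norm q₁ q₂
  have hinner : ⟪g q₁ - g q₂, q₁ - q₂⟫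
      = s₁⁻¹ * a ^ 2 + s₂⁻¹ * b ^ 2 - (s₁⁻¹ + s₂⁻¹) * t := by
    rw [hg q₁, hg q₂]
    simp only [inner_sub_left, inner_sub_right, real_inner_smul_left,
      real_inner_self_eq_norm_sq, ← ha_def, ← hb_def]
    have hcomm : (inner ℝ q₂ q₁ : ℝ) = t := by rw [ht_def]; exact (real_inner_comm q₂ q₁).symm
    rw [hcomm]
    ring
  have hnorm : ‖q₁ - q₂‖ ^ 2 = a ^ 2 + b ^ 2 - 2 * t := by
    rw [ha_def, hb_def, ht_def, @norm_sub_sq_real]; ring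
  have hc : (1 + (a + b) ^ 2) ^ (-(3 / 2 : ℝ)) = (S ^ 3)⁻¹ := by
    rw [← hSsq, ← Real.rpow_natCast S 2, ← Real.rpow_mul hS0.le]
    rw [show ((2:ℕ):ℝ) * -(3/2) = -(3:ℝ) by push_cast; norm_num, Real.rpow_neg hS0.le,
      show (3:ℝ) = ((3:ℕ):ℝ) by norm_num, Real.rpow_natCast]
  -- the key inequality
  have hkey := key' a b t s₁ s₂ S ha hb ht h1 h2 hs₁ hs₂ hs₁S hs₂S
  have hs₁0 : 0 < s₁ := lt_of_lt_of_le one_pos hs₁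
  have hs₂0 : 0 < s₂ := lt_of_lt_of_le one_pos hs₂
  have hmain : (1 + (a + b) ^ 2) ^ (-(3 / 2 : ℝ)) * ‖q₁ - q₂‖ ^ 2 ≤ ⟪g q₁ - g q₂, q₁ - q₂⟫ := by
    rw [hc, hnorm, hinner]
    have hL : (S ^ 3)⁻¹ * (a ^ 2 + b ^ 2 - 2 * t)
        = (s₁ * s₂ * (a ^ 2 + b ^ 2 - 2 * t)) / (s₁ * s₂ * S ^ 3) := by
      field_simp
    have hR : s₁⁻¹ * a ^ 2 + s₂⁻¹ * b ^ 2 - (s₁⁻¹ + s₂⁻¹) * t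
        = (S ^ 3 * (s₂ * a ^ 2 + s₁ * b ^ 2 - (s₁ + s₂) * t)) / (s₁ * s₂ * S ^ 3) := by
      field_simp; ring
    rw [hL, hR]
    gcongr
    all_goals first | exact hkey | positivity
  refine ⟨hmain, ?_, ?_⟩
  · have h0 : 0 ≤ (1 + (a + b) ^ 2) ^ (-(3 / 2 : ℝ)) * ‖q₁ - q₂‖ ^ 2 := by positivity
    linarith
  · constructor
    · intro h
      have h0 : (1 + (a + b) ^ 2) ^ (-(3 / 2 : ℝ)) * ‖q₁ - q₂‖ ^ 2 ≤ 0 := by linarith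
      have hcpos : 0 < (1 + (a + b) ^ 2) ^ (-(3 / 2 : ℝ)) := by positivity
      have hsq : ‖q₁ - q₂‖ = 0 := by
        by_contra hne
        have hpos2 : 0 < ‖q₁ - q₂‖ ^ 2 := by positivity
        nlinarith
      exact sub_eq_zero.mp (norm_eq_zero.mp hsq)
    · intro h; subst h; simp
end

section
/- Let ν₀, ν₁, ν₂ ∈ ℝⁿ with |ν₀| = 1, |ν₁| ≤ 1, |ν₂| ≤ 1, let ρ, r, δ > 0, and suppose |ρνᵢ + rν₀| ≥ ρ + r − δ for i = 1, 2. Then |ν₁ − ν₂| ≤ 2√(2(ρ+r)δ/(ρr)). -/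
lemma aux_key (n : ℕ) (ν₀ ν : EuclideanSpace ℝ (Fin n))
    (hν₀ : ‖ν₀‖ = 1) (hν : ‖ν‖ ≤ 1)
    (ρ r δ : ℝ) (hρ : 0 < ρ) (hr : 0 < r)
    (h : ρ + r - δ ≤ ‖ρ • ν + r • ν₀‖) :
    ‖ν - ν₀‖ ≤ Real.sqrt (2 * (ρ + r) * δ / (ρ * r)) := by
  have hsq : ‖ρ • ν + r • ν₀‖ ^ 2 =
      ρ ^ 2 * ‖ν‖ ^ 2 + 2 * (ρ * r) * inner ℝ ν ν₀ + r ^ 2 * ‖ν₀‖ ^ 2 := by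
    rw [@norm_add_sq_real, norm_smul, norm_smul, real_inner_smul_left,
      real_inner_smul_right, Real.norm_eq_abs, Real.norm_eq_abs,
      abs_of_pos hρ, abs_of_pos hr]
    ring
  have hlb : (ρ + r) ^ 2 - 2 * (ρ + r) * δ ≤ ‖ρ • ν + r • ν₀‖ ^ 2 := by
    rcases le_or_gt 0 (ρ + r - δ) with hc | hc
    · nlinarith [sq_nonneg δ, pow_le_pow_left₀ hc h 2]
    · nlinarith [sq_nonneg (‖ρ • ν + r • ν₀‖)]
  have hinner : 1 - inner ℝ ν ν₀ ≤ (ρ + r) * δ / (ρ * r) := by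
    rw [le_div_iff₀ (by positivity)]
    have h2 : ‖ν‖ ^ 2 ≤ 1 := by nlinarith [pow_le_pow_left₀ (norm_nonneg ν) hν 2]
    have hν₀2 : ‖ν₀‖ ^ 2 = 1 := by rw [hν₀]; norm_num
    nlinarith [mul_le_mul_of_nonneg_left h2 (sq_nonneg ρ), hν₀2, hlb, hsq]
  have hd : ‖ν - ν₀‖ ^ 2 ≤ 2 * (ρ + r) * δ / (ρ * r) := by
    rw [@norm_sub_sq_real, hν₀]
    have h2 : ‖ν‖ ^ 2 ≤ 1 := by nlinarith [pow_le_pow_left₀ (norm_nonneg ν) hν 2]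
    have := hinner
    rw [le_div_iff₀ (by positivity)] at this ⊢
    nlinarith [mul_le_mul_of_nonneg_right h2 (le_of_lt (mul_pos hρ hr))]
  calc ‖ν - ν₀‖ = Real.sqrt (‖ν - ν₀‖ ^ 2) := by
        rw [Real.sqrt_sq (norm_nonneg _)]
    _ ≤ Real.sqrt (2 * (ρ + r) * δ / (ρ * r)) := Real.sqrt_le_sqrt hd

/-- If `|ν₀| = 1`, `|ν₁|, |ν₂| ≤ 1`, `ρ, r, δ > 0` and `|ρνᵢ + rν₀| ≥ ρ + r − δ` for
`i = 1, 2`, then `|ν₁ − ν₂| ≤ 2√(2(ρ+r)δ/(ρr))`. -/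
theorem stmt_5 (n : ℕ) (hn : 1 ≤ n) (ν₀ ν₁ ν₂ : EuclideanSpace ℝ (Fin n))
    (hν₀ : ‖ν₀‖ = 1) (hν₁ : ‖ν₁‖ ≤ 1) (hν₂ : ‖ν₂‖ ≤ 1)
    (ρ r δ : ℝ) (hρ : 0 < ρ) (hr : 0 < r) (hδ : 0 < δ)
    (h₁ : ρ + r - δ ≤ ‖ρ • ν₁ + r • ν₀‖) (h₂ : ρ + r - δ ≤ ‖ρ • ν₂ + r • ν₀‖) :
    ‖ν₁ - ν₂‖ ≤ 2 * Real.sqrt (2 * (ρ + r) * δ / (ρ * r)) := by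
  have k1 := aux_key n ν₀ ν₁ hν₀ hν₁ ρ r δ hρ hr h₁
  have k2 := aux_key n ν₀ ν₂ hν₀ hν₂ ρ r δ hρ hr h₂
  calc ‖ν₁ - ν₂‖ ≤ ‖ν₁ - ν₀‖ + ‖ν₂ - ν₀‖ := by
        simpa [norm_sub_rev ν₂ ν₀] using norm_sub_le_norm_sub_add_norm_sub ν₁ ν₀ ν₂
    _ ≤ 2 * Real.sqrt (2 * (ρ + r) * δ / (ρ * r)) := by linarith
end
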